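/- Invariance of the optimum under the group action: let {ρ_i = U_iρU_i*} be a geometrically uniform state set with uniform priors, let σ_j : {1,...,m} → {1,...,m} be the permutations defined by U_j*U_i = U_{σ_j(i)}, and let {Π̂_i} be a POVM maximizing Σ_i tr(ρ_iΠ_i) over all POVMs. Then for every j, the matrices Π'_i = U_jΠ̂_{σ_j(i)}U_j* also form a POVM and satisfy Σ_i tr(ρ_iΠ'_i) = Σ_i tr(ρ_iΠ̂_i); hence {Π'_i} is also optimal. -/
import Mathlib


open Matrix
open scoped ComplexOrder

/-- invariance of the optimum under the group action: if `{Π̂_i}` is a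
POVM maximizing `∑ tr(ρ_i Π_i)` for a geometrically uniform state set `ρ_i = U_i ρ U_i*`
and `σ_j` are the permutations with `U_j* U_i = U_{σ_j(i)}`, then for every `j` the
matrices `Π'_i = U_j Π̂_{σ_j(i)} U_j*` also form a POVM, attain the same value
`∑ tr(ρ_i Π'_i) = ∑ tr(ρ_i Π̂_i)`, and hence are also optimal. -/
theorem gu_optimum_invariant_under_group (n m : ℕ) [NeZero m]
    (U : Fin m → Matrix (Fin n) (Fin n) ℂ)
    (hUunit : ∀ i, U i ∈ Matrix.unitaryGroup (Fin n) ℂ)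
    (hUinj : Function.Injective U)
    (hUone : U 0 = 1)
    (hUmul : ∀ i j, ∃ t, U i * U j = U t)
    (hUinv : ∀ i, ∃ j, (U i)ᴴ = U j)
    (σ : Fin m → Equiv.Perm (Fin m))
    (hσ : ∀ j i, (U j)ᴴ * U i = U (σ j i))
    (ρ : Matrix (Fin n) (Fin n) ℂ)
    (hρpsd : ρ.PosSemidef) (hρtr : ρ.trace = 1)
    (ρs : Fin m → Matrix (Fin n) (Fin n) ℂ)
    (hρs : ∀ i, ρs i = U i * ρ * (U i)ᴴ)
    (Phat : Fin m → Matrix (Fin n) (Fin n) ℂ)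
    (hPhatpsd : ∀ i, (Phat i).PosSemidef) (hPhatsum : ∑ i, Phat i = 1)
    (hPhatopt : ∀ Pm : Fin m → Matrix (Fin n) (Fin n) ℂ,
      (∀ i, (Pm i).PosSemidef) → (∑ i, Pm i = 1) →
      ∑ i, ((ρs i * Pm i).trace).re ≤ ∑ i, ((ρs i * Phat i).trace).re) :
    ∀ j,
      (∀ i, (U j * Phat (σ j i) * (U j)ᴴ).PosSemidef) ∧
      (∑ i, U j * Phat (σ j i) * (U j)ᴴ = 1) ∧
      (∑ i, (ρs i * (U j * Phat (σ j i) * (U j)ᴴ)).trace =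
        ∑ i, (ρs i * Phat i).trace) ∧
      (∀ Pm : Fin m → Matrix (Fin n) (Fin n) ℂ,
        (∀ i, (Pm i).PosSemidef) → (∑ i, Pm i = 1) →
        ∑ i, ((ρs i * Pm i).trace).re ≤
          ∑ i, ((ρs i * (U j * Phat (σ j i) * (U j)ᴴ)).trace).re) := by

  intro j
  have hUU : U j * (U j)ᴴ = 1 := by
    have := (hUunit j).2
    simpa [Matrix.star_eq_conjTranspose] using this
  have hUU' : (U j)ᴴ * U j = 1 := by
    have := (hUunit j).1
    simpa [Matrix.star_eq_conjTranspose] using this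
  -- trace identity for each i
  have key : ∀ i, (ρs i * (U j * Phat (σ j i) * (U j)ᴴ)).trace
      = (ρs (σ j i) * Phat (σ j i)).trace := by
    intro i
    have h1 : (U j)ᴴ * U i = U (σ j i) := hσ j i
    have h2 : (U i)ᴴ * U j = (U (σ j i))ᴴ := by
      calc (U i)ᴴ * U j = ((U j)ᴴ * U i)ᴴ := by
            rw [Matrix.conjTranspose_mul, Matrix.conjTranspose_conjTranspose]
        _ = (U (σ j i))ᴴ := by rw [h1]
    have e1 : ρs i * (U j * Phat (σ j i) * (U j)ᴴ)
        = (ρs i * U j * Phat (σ j i)) * (U j)ᴴ := by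
      simp only [Matrix.mul_assoc]
    rw [e1, Matrix.trace_mul_comm, hρs i, hρs (σ j i)]
    congr 1
    calc (U j)ᴴ * (U i * ρ * (U i)ᴴ * U j * Phat (σ j i))
        = ((U j)ᴴ * U i) * ρ * ((U i)ᴴ * U j) * Phat (σ j i) := by
          simp only [Matrix.mul_assoc]
      _ = U (σ j i) * ρ * (U (σ j i))ᴴ * Phat (σ j i) := by rw [h1, h2]
  have hsum : (∑ i, (ρs i * (U j * Phat (σ j i) * (U j)ᴴ)).trace)
      = ∑ i, (ρs i * Phat i).trace := by
    rw [Finset.sum_congr rfl (fun i _ => key i)]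
    exact Equiv.sum_comp (σ j) (fun k => (ρs k * Phat k).trace)
  refine ⟨fun i => (hPhatpsd (σ j i)).mul_mul_conjTranspose_same (U j), ?_, hsum, ?_⟩
  · have : ∑ i, U j * Phat (σ j i) * (U j)ᴴ
        = U j * (∑ i, Phat (σ j i)) * (U j)ᴴ := by
      rw [Finset.mul_sum, Finset.sum_mul]
    rw [this, Equiv.sum_comp (σ j) Phat, hPhatsum, Matrix.mul_one, hUU]
  · intro Pm hpsd hs
    have := hPhatopt Pm hpsd hs
    have h2 : ∑ i, ((ρs i * (U j * Phat (σ j i) * (U j)ᴴ)).trace).re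
        = ∑ i, ((ρs i * Phat i).trace).re := by
      have := congrArg Complex.re hsum
      simpa [Complex.re_sum] using this
    rw [h2]; exact this
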